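/- Let f(r) = -∫ log(∫ exp(-βρ(x,y)) dr(y)) dp(x) where p is a probability measure supported in [-M,M]^d. Suppose the optimal r* over all probability measures on ℝ^d is supported in [-M,M]^d, and exp(-βρ(x,·)) is L-Lipschitz on [-M,M]^d uniformly in x ∈ [-M,M]^d with uniform lower bound ∫ exp(-βρ(x,y)) dμ(y) ≥ δ₀ for μ ∈ {qⁿ, r*}. Then the optimal values f(rⁿ) of the problems restricted to discrete measures supported on the n-point uniform grid of [-M,M]^d satisfy 0 ≤ f(rⁿ) - f(r*) ≤ Lh/(2δ₀), where h = 2M/n^{1/d}. -/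

import Mathlib

open MeasureTheory

/-- The RD objective `f(r) = -∫ log (∫ exp (-β ρ (x,y)) dr(y)) dp(x)`. -/
noncomputable def RDobjective {d : ℕ} (ρ : ((Fin d → ℝ) × (Fin d → ℝ)) → ℝ) (β : ℝ)
    (p : Measure (Fin d → ℝ)) (r : Measure (Fin d → ℝ)) : ℝ :=
  -∫ x, Real.log (∫ z, Real.exp (-β * ρ (x, z)) ∂r) ∂p

lemma integrable_dirac_of_sm {α E : Type*} [MeasurableSpace α] [MeasurableSingletonClass α]
    [NormedAddCommGroup E] {f : α → E} (hf : StronglyMeasurable f) (a : α) :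
    Integrable f (Measure.dirac a) := by
  refine ⟨hf.aestronglyMeasurable, ?_⟩
  simp [HasFiniteIntegral, lintegral_dirac]

/-- the optimal values of the RD problem restricted to measures supported on
the `n`-point uniform grid of `[-M,M]^d` satisfy `0 ≤ f(rⁿ) - f(r*) ≤ L h/(2δ₀)`,
`h = 2M/n^{1/d}`, under the Lipschitz and lower-bound assumptions. -/
theorem discrete_RD_value_error {d n : ℕ}
    (ρ : ((Fin d → ℝ) × (Fin d → ℝ)) → ℝ) (hρ : Continuous ρ)
    (β M h L δ₀ : ℝ) (hβ : 0 < β) (hM : 0 < M) (hL : 0 < L) (hδ₀ : 0 < δ₀)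
    (hstep : h = 2 * M / (n : ℝ) ^ ((d : ℝ)⁻¹))
    (p rstar rn : Measure (Fin d → ℝ))
    [IsProbabilityMeasure p] [IsProbabilityMeasure rstar] [IsProbabilityMeasure rn]
    (hp : p {x : Fin d → ℝ | ‖x‖ ≤ M} = 1)
    (hrstarsupp : rstar {z : Fin d → ℝ | ‖z‖ ≤ M} = 1)
    -- `r*` is optimal among all probability measures on `ℝ^d`
    (hstaropt : ∀ r : Measure (Fin d → ℝ), IsProbabilityMeasure r →
      RDobjective ρ β p rstar ≤ RDobjective ρ β p r)
    -- the uniform grid `{y_j^n}` of `[-M,M]^d` with cells `I_j` of side `h`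
    (y : Fin n → (Fin d → ℝ)) (I : Fin n → Set (Fin d → ℝ))
    (hymem : ∀ j, ‖y j‖ ≤ M)
    (hmeas : ∀ j, MeasurableSet (I j))
    (hdisj : Pairwise (Function.onFun Disjoint I))
    (hcover : (⋃ j, I j) = {z : Fin d → ℝ | ‖z‖ ≤ M})
    (hcell : ∀ j, I j ⊆ Metric.closedBall (y j) (h / 2))
    -- `rⁿ` minimizes `f` over discrete measures supported on the grid
    (hrnform : ∃ c : Fin n → ENNReal, (∑ j, c j) = 1 ∧
      rn = ∑ j, c j • Measure.dirac (y j))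
    (hrnopt : ∀ c : Fin n → ENNReal, (∑ j, c j) = 1 →
      RDobjective ρ β p rn ≤ RDobjective ρ β p (∑ j, c j • Measure.dirac (y j)))
    -- uniform `L`-Lipschitz property of `exp (-β ρ (x, ·))` on `[-M,M]^d`
    (hLip : ∀ x : Fin d → ℝ, ‖x‖ ≤ M → ∀ y₁ y₂ : Fin d → ℝ, ‖y₁‖ ≤ M → ‖y₂‖ ≤ M →
      |Real.exp (-β * ρ (x, y₁)) - Real.exp (-β * ρ (x, y₂))| ≤ L * ‖y₁ - y₂‖)
    -- uniform lower bound `δ₀` for `μ ∈ {qⁿ, r*}`, where `qⁿ` is the cell-mass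
    -- discretization of `r*`
    (hlow : ∀ x : Fin d → ℝ, ‖x‖ ≤ M →
      δ₀ ≤ (∫ z, Real.exp (-β * ρ (x, z)) ∂(∑ j, rstar (I j) • Measure.dirac (y j))) ∧
      δ₀ ≤ ∫ z, Real.exp (-β * ρ (x, z)) ∂rstar) :
    0 ≤ RDobjective ρ β p rn - RDobjective ρ β p rstar ∧
      RDobjective ρ β p rn - RDobjective ρ β p rstar ≤ L * h / (2 * δ₀) := by
  classical
  set F : ((Fin d → ℝ) × (Fin d → ℝ)) → ℝ := fun w => Real.exp (-β * ρ w) with hFdef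
  have hF : Continuous F := Real.continuous_exp.comp ((continuous_const.mul hρ))
  set qn : Measure (Fin d → ℝ) := ∑ j, rstar (I j) • Measure.dirac (y j) with hqndef
  -- basic facts
  have hS : MeasurableSet {z : Fin d → ℝ | ‖z‖ ≤ M} :=
    (isClosed_le continuous_norm continuous_const).measurableSet
  have hh : 0 ≤ h := by
    rw [hstep]
    exact div_nonneg (by positivity) (Real.rpow_nonneg (Nat.cast_nonneg n) _)
  have hsum1 : (∑ j, rstar (I j)) = 1 := by
    have h1 : rstar (⋃ j, I j) = ∑' j, rstar (I j) := measure_iUnion hdisj hmeas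
    rw [hcover, hrstarsupp, tsum_fintype] at h1
    exact h1.symm
  have hcne : ∀ j, rstar (I j) ≠ ⊤ := fun j => (measure_ne_top _ _)
  have hsumto : (∑ j, (rstar (I j)).toReal) = 1 := by
    rw [← ENNReal.toReal_sum (fun j _ => hcne j), hsum1, ENNReal.toReal_one]
  have hqnprob : IsProbabilityMeasure qn := by
    constructor
    rw [hqndef]
    simp only [Measure.coe_finset_sum, Finset.sum_apply, Measure.smul_apply,
      Measure.dirac_apply_of_mem (Set.mem_univ _), smul_eq_mul, mul_one]
    exact hsum1
  -- part 1
  have h1 : RDobjective ρ β p rstar ≤ RDobjective ρ β p rn := hstaropt rn inferInstance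
  have h2 : RDobjective ρ β p rn ≤ RDobjective ρ β p qn :=
    hrnopt (fun j => rstar (I j)) hsum1
  refine ⟨sub_nonneg.mpr h1, ?_⟩
  -- a.e. facts
  have haep : ∀ᵐ x ∂p, ‖x‖ ≤ M :=
    (mem_ae_iff_prob_eq_one hS).mpr hp
  have haer : ∀ᵐ z ∂rstar, ‖z‖ ≤ M :=
    (mem_ae_iff_prob_eq_one hS).mpr hrstarsupp
  -- uniform bound C on the compact product
  obtain ⟨C, hC⟩ : ∃ C, ∀ w ∈ (Metric.closedBall (0 : Fin d → ℝ) M) ×ˢ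
      (Metric.closedBall (0 : Fin d → ℝ) M), ‖F w‖ ≤ C :=
    ((isCompact_closedBall _ _).prod (isCompact_closedBall _ _)).exists_bound_of_continuousOn
      hF.continuousOn
  have hCball : ∀ x z : Fin d → ℝ, ‖x‖ ≤ M → ‖z‖ ≤ M → F (x, z) ≤ C := by
    intro x z hx hz
    have := hC (x, z) (by
      constructor <;> simpa [mem_closedBall_zero_iff])
    exact (le_abs_self _).trans (by rwa [Real.norm_eq_abs] at this)
  have hCpos : 0 < C := lt_of_lt_of_le (Real.exp_pos _)
    (hCball 0 0 (by simp [hM.le]) (by simp [hM.le]))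
  -- integrand continuity in z
  have hFz : ∀ x : Fin d → ℝ, Continuous fun z => F (x, z) :=
    fun x => hF.comp (Continuous.prodMk_right x)
  -- integrability w.r.t. rstar
  have hint_star : ∀ x : Fin d → ℝ, ‖x‖ ≤ M →
      Integrable (fun z => F (x, z)) rstar := by
    intro x hx
    refine Integrable.mono' (integrable_const C) (hFz x).aestronglyMeasurable ?_
    filter_upwards [haer] with z hz
    rw [Real.norm_eq_abs, abs_of_pos (Real.exp_pos _)]
    exact hCball x z hx hz
  -- value of the integral w.r.t. qn
  have hgq : ∀ x : Fin d → ℝ,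
      (∫ z, F (x, z) ∂qn) = ∑ j, (rstar (I j)).toReal * F (x, y j) := by
    intro x
    rw [hqndef, integral_finset_sum_measure (fun j _ =>
      (integrable_dirac_of_sm (hFz x).stronglyMeasurable (y j)).smul_measure (hcne j))]
    simp [integral_smul_measure, integral_dirac, smul_eq_mul]
  -- splitting the rstar integral over the cells
  have hsplit : ∀ x : Fin d → ℝ, ‖x‖ ≤ M →
      (∫ z, F (x, z) ∂rstar) = ∑ j, ∫ z in I j, F (x, z) ∂rstar := by
    intro x hx
    have hrestr : rstar.restrict {z : Fin d → ℝ | ‖z‖ ≤ M} = rstar :=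
      Measure.restrict_eq_self_of_ae_mem haer
    calc (∫ z, F (x, z) ∂rstar) = ∫ z in ⋃ j, I j, F (x, z) ∂rstar := by
          rw [hcover, hrestr]
      _ = ∑' j, ∫ z in I j, F (x, z) ∂rstar :=
          integral_iUnion hmeas hdisj ((hint_star x hx).integrableOn)
      _ = ∑ j, ∫ z in I j, F (x, z) ∂rstar := tsum_fintype _
  -- closeness of the two integrals
  have hclose : ∀ x : Fin d → ℝ, ‖x‖ ≤ M →
      |(∫ z, F (x, z) ∂qn) - ∫ z, F (x, z) ∂rstar| ≤ L * (h / 2) := by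
    intro x hx
    rw [hgq x, hsplit x hx, ← Finset.sum_sub_distrib]
    refine (Finset.abs_sum_le_sum_abs _ _).trans ?_
    have hterm : ∀ j, |(rstar (I j)).toReal * F (x, y j) - ∫ z in I j, F (x, z) ∂rstar|
        ≤ (rstar (I j)).toReal * (L * (h / 2)) := by
      intro j
      have hconst : (rstar (I j)).toReal * F (x, y j)
          = ∫ z in I j, F (x, y j) ∂rstar := by
        rw [setIntegral_const, smul_eq_mul]; rfl
      rw [hconst, ← integral_sub ((integrableOn_const_iff (C := F (x, y j))).mpr (Or.inr (measure_lt_top _ _)))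
        ((hint_star x hx).integrableOn)]
      rw [← Real.norm_eq_abs]
      have := norm_setIntegral_le_of_norm_le_const (measure_lt_top rstar (I j))
        (C := L * (h / 2)) (f := fun z => F (x, y j) - F (x, z)) ?_
      · exact this.trans (le_of_eq (mul_comm _ _))
      · intro z hz
        have hzM : ‖z‖ ≤ M := by
          have : z ∈ ⋃ j, I j := Set.mem_iUnion.mpr ⟨j, hz⟩
          rw [hcover] at this; exact this
        have hdist : ‖y j - z‖ ≤ h / 2 := by
          have := hcell j hz
          rw [Metric.mem_closedBall, dist_comm] at this
          rwa [← dist_eq_norm]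
        calc ‖F (x, y j) - F (x, z)‖ = |F (x, y j) - F (x, z)| := Real.norm_eq_abs _
          _ ≤ L * ‖y j - z‖ := hLip x hx (y j) z (hymem j) hzM
          _ ≤ L * (h / 2) := by nlinarith
    calc (∑ j, |(rstar (I j)).toReal * F (x, y j) - ∫ z in I j, F (x, z) ∂rstar|)
        ≤ ∑ j, (rstar (I j)).toReal * (L * (h / 2)) :=
          Finset.sum_le_sum (fun j _ => hterm j)
      _ = L * (h / 2) := by rw [← Finset.sum_mul, hsumto, one_mul]
  -- pointwise log bound
  have hlog : ∀ x : Fin d → ℝ, ‖x‖ ≤ M →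
      Real.log (∫ z, F (x, z) ∂rstar) - Real.log (∫ z, F (x, z) ∂qn)
        ≤ L * h / (2 * δ₀) := by
    intro x hx
    set a := ∫ z, F (x, z) ∂rstar with hadef
    set b := ∫ z, F (x, z) ∂qn with hbdef
    have hbδ : δ₀ ≤ b := (hlow x hx).1
    have haδ : δ₀ ≤ a := (hlow x hx).2
    have hbpos : 0 < b := lt_of_lt_of_le hδ₀ hbδ
    have hapos : 0 < a := lt_of_lt_of_le hδ₀ haδ
    have hdiff : a - b ≤ L * (h / 2) := by
      have := hclose x hx
      rw [abs_sub_comm] at this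
      exact (le_abs_self _).trans this
    have key : Real.log a - Real.log b ≤ (a - b) / b := by
      rw [← Real.log_div hapos.ne' hbpos.ne']
      have := Real.log_le_sub_one_of_pos (div_pos hapos hbpos)
      calc Real.log (a / b) ≤ a / b - 1 := this
        _ = (a - b) / b := by field_simp
    refine key.trans ?_
    have hrhs : L * h / (2 * δ₀) = (L * (h / 2)) / δ₀ := by
      field_simp
    rw [hrhs]
    exact div_le_div₀ (by positivity) hdiff hδ₀ hbδ
  -- measurability of the inner integrals
  have hsm_star : StronglyMeasurable fun x => ∫ z, F (x, z) ∂rstar :=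
    hF.stronglyMeasurable.integral_prod_right'
  haveI := hqnprob
  have hsm_qn : StronglyMeasurable fun x => ∫ z, F (x, z) ∂qn :=
    hF.stronglyMeasurable.integral_prod_right'
  -- bounds on inner integrals
  have hub_star : ∀ x : Fin d → ℝ, ‖x‖ ≤ M → (∫ z, F (x, z) ∂rstar) ≤ C := by
    intro x hx
    have hb : ∀ᵐ z ∂rstar, ‖F (x, z)‖ ≤ C := by
      filter_upwards [haer] with z hz
      rw [Real.norm_eq_abs, abs_of_pos (Real.exp_pos _)]
      exact hCball x z hx hz
    have := norm_integral_le_of_norm_le_const hb (f := fun z => F (x, z))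
    rw [probReal_univ, mul_one] at this
    exact (le_abs_self _).trans (by rwa [Real.norm_eq_abs] at this)
  have hub_qn : ∀ x : Fin d → ℝ, ‖x‖ ≤ M → (∫ z, F (x, z) ∂qn) ≤ C := by
    intro x hx
    rw [hgq x]
    calc (∑ j, (rstar (I j)).toReal * F (x, y j)) ≤ ∑ j, (rstar (I j)).toReal * C :=
        Finset.sum_le_sum (fun j _ => by
          have := hCball x (y j) hx (hymem j)
          have h0 : (0:ℝ) ≤ (rstar (I j)).toReal := ENNReal.toReal_nonneg
          nlinarith)
      _ = C := by rw [← Finset.sum_mul, hsumto, one_mul]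
  -- integrability of the logarithms
  set B : ℝ := |Real.log δ₀| + |Real.log C| with hBdef
  have hlogbound : ∀ t : ℝ, δ₀ ≤ t → t ≤ C → ‖Real.log t‖ ≤ B := by
    intro t h1 h2
    rw [Real.norm_eq_abs, abs_le]
    constructor
    · have := Real.log_le_log hδ₀ h1
      have h3 : -|Real.log δ₀| ≤ Real.log δ₀ := neg_abs_le _
      have h4 : (0:ℝ) ≤ |Real.log C| := abs_nonneg _
      rw [hBdef]; linarith
    · have := Real.log_le_log (lt_of_lt_of_le hδ₀ h1) h2
      have h3 : Real.log C ≤ |Real.log C| := le_abs_self _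
      have h4 : (0:ℝ) ≤ |Real.log δ₀| := abs_nonneg _
      rw [hBdef]; linarith
  have hint_logstar : Integrable (fun x => Real.log (∫ z, F (x, z) ∂rstar)) p := by
    refine Integrable.mono' (integrable_const B)
      (Real.measurable_log.comp hsm_star.measurable).aestronglyMeasurable ?_
    filter_upwards [haep] with x hx
    exact hlogbound _ (hlow x hx).2 (hub_star x hx)
  have hint_logqn : Integrable (fun x => Real.log (∫ z, F (x, z) ∂qn)) p := by
    refine Integrable.mono' (integrable_const B)
      (Real.measurable_log.comp hsm_qn.measurable).aestronglyMeasurable ?_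
    filter_upwards [haep] with x hx
    exact hlogbound _ (hlow x hx).1 (hub_qn x hx)
  -- final bound
  have hfinal : RDobjective ρ β p qn - RDobjective ρ β p rstar ≤ L * h / (2 * δ₀) := by
    have heq : RDobjective ρ β p qn - RDobjective ρ β p rstar
        = ∫ x, (Real.log (∫ z, F (x, z) ∂rstar)
            - Real.log (∫ z, F (x, z) ∂qn)) ∂p := by
      rw [integral_sub hint_logstar hint_logqn]
      simp only [RDobjective]
      ring
    rw [heq]
    have hmono := integral_mono_ae (hint_logstar.sub hint_logqn)
      (integrable_const (L * h / (2 * δ₀)))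
      (by filter_upwards [haep] with x hx using hlog x hx)
    rw [integral_const, probReal_univ, one_smul] at hmono
    exact hmono
  linarith
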